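/- arXiv:2604.16071 — 4 statements merged into one kernel-verified Lean document; each statement's English description precedes it below -/
import Mathlib

section
/- Let (Ω, 𝓕, μ) be a probability space with a filtration 𝓕₀ ⊆ 𝓕₁ ⊆ … ⊆ 𝓕ₙ, and let I₁, …, Iₙ be {0,1}-valued random variables such that each Iᵢ is 𝓕ᵢ-measurable. Let p ∈ (0,1) and suppose that for every i ∈ {1,…,n} the conditional expectation satisfies E[Iᵢ ∣ 𝓕_{i-1}] ≤ p almost surely. Let S = Σ_{i=1}^n Iᵢ. Then for every integer τ with n·p < τ ≤ n, μ(S ≥ τ) ≤ exp(−n · D(τ/n ‖ p)). -/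
open MeasureTheory Real Filter ENNReal Topology

/-- Binary relative entropy `D(u ‖ v)`.  The convention `0 · ln 0 = 0` is automatic here,
since the problematic logarithm is multiplied by a factor that vanishes in that case. -/
noncomputable def klBin (u v : ℝ) : ℝ :=
  u * Real.log (u / v) + (1 - u) * Real.log ((1 - u) / (1 - v))

lemma mgf_bound_aux
    {Ω : Type*} {m0 : MeasurableSpace Ω} {μ : Measure Ω} [IsProbabilityMeasure μ]
    (n : ℕ) (𝓕 : Filtration ℕ m0) (I : ℕ → Ω → ℝ)
    (hbin : ∀ i ∈ Finset.Icc 1 n, ∀ ω, I i ω = 0 ∨ I i ω = 1)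
    (hmeas : ∀ i ∈ Finset.Icc 1 n, Measurable[𝓕 i] (I i))
    (p : ℝ) (hp : p ∈ Set.Ioo (0 : ℝ) 1)
    (hcond : ∀ i ∈ Finset.Icc 1 n, ∀ᵐ ω ∂μ, (μ[I i | 𝓕 (i - 1)]) ω ≤ p)
    (l : ℝ) (hl : 0 ≤ l) :
    ∀ k, k ≤ n → Integrable (fun ω => ∏ i ∈ Finset.Icc 1 k, Real.exp (l * I i ω)) μ ∧
      ∫ ω, ∏ i ∈ Finset.Icc 1 k, Real.exp (l * I i ω) ∂μ ≤ (1 - p + p * Real.exp l) ^ k := by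
  have hexp1 : (1 : ℝ) ≤ Real.exp l := by
    simpa using Real.exp_le_exp.2 hl
  have hc0 : (0 : ℝ) < 1 - p + p * Real.exp l := by nlinarith [hp.1, hp.2, Real.exp_pos l]
  -- measurability of partial products
  have hFmeas : ∀ k, k ≤ n →
      Measurable[𝓕 k] (fun ω => ∏ i ∈ Finset.Icc 1 k, Real.exp (l * I i ω)) := by
    intro k hk
    apply Finset.measurable_prod
    intro i hi
    have hik : i ≤ k := (Finset.mem_Icc.1 hi).2
    have hin : i ∈ Finset.Icc 1 n :=
      Finset.mem_Icc.2 ⟨(Finset.mem_Icc.1 hi).1, hik.trans hk⟩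
    exact Real.measurable_exp.comp
      (((hmeas i hin).mono (𝓕.mono hik) le_rfl).const_mul l)
  -- pointwise bounds
  have hFnonneg : ∀ k (ω : Ω), 0 ≤ ∏ i ∈ Finset.Icc 1 k, Real.exp (l * I i ω) := fun k ω =>
    Finset.prod_nonneg fun i _ => (Real.exp_pos _).le
  have hFbdd : ∀ k, k ≤ n → ∀ ω : Ω,
      ∏ i ∈ Finset.Icc 1 k, Real.exp (l * I i ω) ≤ Real.exp l ^ k := by
    intro k hk ω
    calc ∏ i ∈ Finset.Icc 1 k, Real.exp (l * I i ω)
        ≤ ∏ _i ∈ Finset.Icc 1 k, Real.exp l := by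
          apply Finset.prod_le_prod (fun i _ => (Real.exp_pos _).le)
          intro i hi
          have hin : i ∈ Finset.Icc 1 n :=
            Finset.mem_Icc.2 ⟨(Finset.mem_Icc.1 hi).1, (Finset.mem_Icc.1 hi).2.trans hk⟩
          apply Real.exp_le_exp.2
          rcases hbin i hin ω with h | h <;> simp [h] <;> nlinarith
      _ = Real.exp l ^ k := by rw [Finset.prod_const, Nat.card_Icc]; norm_num
  have hFint : ∀ k, k ≤ n →
      Integrable (fun ω => ∏ i ∈ Finset.Icc 1 k, Real.exp (l * I i ω)) μ := by
    intro k hk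
    refine (integrable_const (Real.exp l ^ k)).mono'
      (((hFmeas k hk).mono (𝓕.le k) le_rfl).aestronglyMeasurable) ?_
    exact ae_of_all _ fun ω => by
      rw [Real.norm_eq_abs, abs_of_nonneg (hFnonneg k ω)]; exact hFbdd k hk ω
  intro k hk
  refine ⟨hFint k hk, ?_⟩
  induction k with
  | zero => simp
  | succ k ih =>
    have hk' : k ≤ n := Nat.le_of_succ_le hk
    have hsn : k + 1 ∈ Finset.Icc 1 n := Finset.mem_Icc.2 ⟨Nat.succ_le_succ (Nat.zero_le k), hk⟩
    -- split the product
    have hsplit : ∀ ω : Ω, ∏ i ∈ Finset.Icc 1 (k+1), Real.exp (l * I i ω)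
        = (∏ i ∈ Finset.Icc 1 k, Real.exp (l * I i ω)) * Real.exp (l * I (k+1) ω) := by
      intro ω
      rw [Finset.prod_Icc_succ_top (Nat.succ_le_succ (Nat.zero_le k))]
    set F : Ω → ℝ := fun ω => ∏ i ∈ Finset.Icc 1 k, Real.exp (l * I i ω) with hF
    set g : Ω → ℝ := fun ω => 1 + (Real.exp l - 1) * I (k+1) ω with hg
    have hexpg : ∀ ω, Real.exp (l * I (k+1) ω) = g ω := by
      intro ω
      rcases hbin (k+1) hsn ω with h | h <;> simp [hg, h]
    have hFg : (fun ω => ∏ i ∈ Finset.Icc 1 (k+1), Real.exp (l * I i ω)) = F * g := by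
      funext ω; rw [hsplit ω, hexpg ω]; rfl
    have hI_int : Integrable (I (k+1)) μ := by
      refine (integrable_const (1:ℝ)).mono'
        (((hmeas _ hsn).mono (𝓕.le _) le_rfl).aestronglyMeasurable) ?_
      exact ae_of_all _ fun ω => by rcases hbin (k+1) hsn ω with h | h <;> simp [h]
    have hg_int : Integrable g μ := (integrable_const (1:ℝ)).add (hI_int.const_mul _)
    have hFg_int : Integrable (F * g) μ := hFg ▸ hFint (k+1) hk
    -- conditional expectation computation
    have hpull : μ[F * g | 𝓕 k] =ᵐ[μ] F * μ[g | 𝓕 k] :=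
      condExp_mul_of_stronglyMeasurable_left (hFmeas k hk').stronglyMeasurable hFg_int hg_int
    have hcondg : μ[g | 𝓕 k] =ᵐ[μ] fun ω => 1 + (Real.exp l - 1) * (μ[I (k+1) | 𝓕 k]) ω := by
      have h1 : μ[g | 𝓕 k] =ᵐ[μ]
          μ[(fun _ => (1:ℝ)) | 𝓕 k] + μ[(Real.exp l - 1) • I (k+1) | 𝓕 k] := by
        have : g = (fun _ => (1:ℝ)) + (Real.exp l - 1) • I (k+1) := by
          funext ω; simp [hg, smul_eq_mul]
        rw [this]
        exact condExp_add (integrable_const _) (hI_int.smul _) _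
      have h2 : μ[(Real.exp l - 1) • I (k+1) | 𝓕 k]
          =ᵐ[μ] (Real.exp l - 1) • μ[I (k+1) | 𝓕 k] := condExp_smul _ _ _
      filter_upwards [h1, h2] with ω h1 h2
      rw [h1]
      simp only [Pi.add_apply, h2, Pi.smul_apply, smul_eq_mul]
      rw [condExp_const (𝓕.le k)]
    have hcp : ∀ᵐ ω ∂μ, (μ[I (k+1) | 𝓕 k]) ω ≤ p := by
      have := hcond (k+1) hsn
      simpa using this
    -- a.e. bound on the conditional expectation of the product
    have hbound : ∀ᵐ ω ∂μ, (μ[F * g | 𝓕 k]) ω ≤ F ω * (1 - p + p * Real.exp l) := by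
      filter_upwards [hpull, hcondg, hcp] with ω h1 h2 h3
      rw [h1]
      simp only [Pi.mul_apply]
      have hF0 : 0 ≤ F ω := hFnonneg k ω
      have : (μ[g | 𝓕 k]) ω ≤ 1 - p + p * Real.exp l := by
        rw [h2]; nlinarith [hexp1]
      nlinarith [this]
    have hint : ∫ ω, ∏ i ∈ Finset.Icc 1 (k+1), Real.exp (l * I i ω) ∂μ
        = ∫ ω, (μ[F * g | 𝓕 k]) ω ∂μ := by
      rw [integral_condExp (𝓕.le k), hFg]
    rw [hint]
    have step1 : ∫ ω, (μ[F * g | 𝓕 k]) ω ∂μ ≤ ∫ ω, F ω * (1 - p + p * Real.exp l) ∂μ :=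
      integral_mono_ae integrable_condExp ((hFint k hk').mul_const _) hbound
    have step2 : ∫ ω, F ω * (1 - p + p * Real.exp l) ∂μ
        = (∫ ω, F ω ∂μ) * (1 - p + p * Real.exp l) := by
      rw [integral_mul_const]
    calc ∫ ω, (μ[F * g | 𝓕 k]) ω ∂μ ≤ (∫ ω, F ω ∂μ) * (1 - p + p * Real.exp l) := by
          rw [← step2]; exact step1
      _ ≤ (1 - p + p * Real.exp l) ^ k * (1 - p + p * Real.exp l) := by
          apply mul_le_mul_of_nonneg_right (ih hk') hc0.le
      _ = (1 - p + p * Real.exp l) ^ (k+1) := by ring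

lemma markov_aux
    {Ω : Type*} {m0 : MeasurableSpace Ω} {μ : Measure Ω} [IsProbabilityMeasure μ]
    (n : ℕ) (I : ℕ → Ω → ℝ) (p : ℝ) (τ : ℤ)
    (hbin : ∀ i ∈ Finset.Icc 1 n, ∀ ω, I i ω = 0 ∨ I i ω = 1)
    (hp : p ∈ Set.Ioo (0 : ℝ) 1)
    (hFint : ∀ l : ℝ, 0 ≤ l → Integrable (fun ω => ∏ i ∈ Finset.Icc 1 n, Real.exp (l * I i ω)) μ)
    (hFbd : ∀ l : ℝ, 0 ≤ l →
      ∫ ω, ∏ i ∈ Finset.Icc 1 n, Real.exp (l * I i ω) ∂μ ≤ (1 - p + p * Real.exp l) ^ n)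
    (l : ℝ) (hl : 0 < l) :
    μ {ω | (τ : ℝ) ≤ ∑ i ∈ Finset.Icc 1 n, I i ω}
      ≤ ENNReal.ofReal (Real.exp (-(l * τ)) * (1 - p + p * Real.exp l) ^ n) := by
  set f : Ω → ℝ := fun ω => ∏ i ∈ Finset.Icc 1 n, Real.exp (l * I i ω) with hf
  have hfeq : ∀ ω, f ω = Real.exp (l * ∑ i ∈ Finset.Icc 1 n, I i ω) := by
    intro ω
    rw [Finset.mul_sum, Real.exp_sum]
  have hset : {x | Real.exp (l * τ) ≤ f x} = {ω | (τ : ℝ) ≤ ∑ i ∈ Finset.Icc 1 n, I i ω} := by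
    ext ω
    simp only [Set.mem_setOf_eq, hfeq ω, Real.exp_le_exp]
    exact mul_le_mul_iff_right₀ hl
  have hmar := mul_meas_ge_le_integral_of_nonneg
    (ae_of_all μ fun ω => Finset.prod_nonneg fun i _ => (Real.exp_pos _).le)
    (hFint l hl.le) (Real.exp (l * τ))
  rw [hset] at hmar
  have h1 : (μ {ω | (τ : ℝ) ≤ ∑ i ∈ Finset.Icc 1 n, I i ω}).toReal
      ≤ Real.exp (-(l * τ)) * (1 - p + p * Real.exp l) ^ n := by
    have h2 := hmar.trans (hFbd l hl.le)
    rw [Real.exp_neg]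
    rw [mul_comm, ← le_div_iff₀ (Real.exp_pos _)] at h2
    calc (μ {ω | (τ : ℝ) ≤ ∑ i ∈ Finset.Icc 1 n, I i ω}).toReal
        ≤ (1 - p + p * Real.exp l) ^ n / Real.exp (l * τ) := h2
      _ = (Real.exp (l * τ))⁻¹ * (1 - p + p * Real.exp l) ^ n := by ring
  calc μ {ω | (τ : ℝ) ≤ ∑ i ∈ Finset.Icc 1 n, I i ω}
      = ENNReal.ofReal (μ {ω | (τ : ℝ) ≤ ∑ i ∈ Finset.Icc 1 n, I i ω}).toReal := by
        rw [ENNReal.ofReal_toReal (measure_ne_top μ _)]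
    _ ≤ ENNReal.ofReal (Real.exp (-(l * τ)) * (1 - p + p * Real.exp l) ^ n) :=
        ENNReal.ofReal_le_ofReal h1

lemma opt_aux (X : ℝ≥0∞) (n : ℕ) (hn : 0 < n) (p : ℝ) (hp : p ∈ Set.Ioo (0:ℝ) 1)
    (τ : ℤ) (hτ1 : (n : ℝ) * p < τ) (hτ2 : (τ : ℝ) ≤ n)
    (hkey : ∀ l : ℝ, 0 < l →
      X ≤ ENNReal.ofReal (Real.exp (-(l * τ)) * (1 - p + p * Real.exp l) ^ n)) :
    X ≤ ENNReal.ofReal (Real.exp (-(n : ℝ) * klBin ((τ : ℝ) / n) p)) := by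
  have hn' : (0:ℝ) < n := Nat.cast_pos.2 hn
  set q : ℝ := (τ : ℝ) / n with hqdef
  have hpq : p < q := (lt_div_iff₀ hn').2 (by linarith [hτ1])
  have hq1 : q ≤ 1 := by rw [hqdef, div_le_one hn']; exact hτ2
  have hq0 : 0 < q := lt_trans hp.1 hpq
  have hτn : (τ : ℝ) = n * q := by rw [hqdef]; field_simp
  clear_value q
  rcases lt_or_eq_of_le hq1 with hqlt | hqeq
  · -- q < 1 : optimal λ
    have h1q : (0:ℝ) < 1 - q := by linarith
    have h1p : (0:ℝ) < 1 - p := by linarith [hp.2]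
    set r : ℝ := q * (1 - p) / ((1 - q) * p) with hrdef
    have hr1 : 1 < r := by
      rw [hrdef, lt_div_iff₀ (mul_pos h1q hp.1)]
      nlinarith [hp.1]
    have hr0 : 0 < r := lt_trans zero_lt_one hr1
    clear_value r
    set l : ℝ := Real.log r with hldef
    have hl : 0 < l := Real.log_pos hr1
    have hexpl : Real.exp l = r := Real.exp_log hr0
    refine (hkey l hl).trans (le_of_eq ?_)
    congr 1
    have hc : 1 - p + p * r = (1 - p) / (1 - q) := by
      have h3 : (1 - q) * p ≠ 0 := ne_of_gt (mul_pos h1q hp.1)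
      have h4 : p ≠ 0 := ne_of_gt hp.1
      rw [hrdef]
      field_simp
      ring
    rw [hexpl, hc]
    have hcpos : (0:ℝ) < (1 - p) / (1 - q) := div_pos h1p h1q
    rw [← Real.exp_log hcpos, ← Real.exp_nat_mul, ← Real.exp_add]
    congr 1
    have hlogr : l = (Real.log q - Real.log p) + (Real.log (1 - p) - Real.log (1 - q)) := by
      rw [hldef, hrdef, Real.log_div (ne_of_gt (mul_pos hq0 h1p)) (ne_of_gt (mul_pos h1q hp.1)),
        Real.log_mul (ne_of_gt hq0) (ne_of_gt h1p),
        Real.log_mul (ne_of_gt h1q) (ne_of_gt hp.1)]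
      ring
    have hkl : klBin q p = q * (Real.log q - Real.log p)
        + (1 - q) * (Real.log (1 - q) - Real.log (1 - p)) := by
      unfold klBin
      rw [Real.log_div (ne_of_gt hq0) (ne_of_gt hp.1),
        Real.log_div (ne_of_gt h1q) (ne_of_gt h1p)]
    rw [hτn, hlogr, Real.log_div (ne_of_gt h1p) (ne_of_gt h1q), hkl]
    ring
  · -- q = 1 : τ = n, limit argument
    have hτn' : (τ : ℝ) = n := by rw [hτn, hqeq, mul_one]
    have hkl1 : klBin q p = -Real.log p := by
      rw [hqeq]; unfold klBin
      norm_num [one_div, Real.log_inv]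
    have htarget : Real.exp (-(n : ℝ) * klBin q p) = p ^ n := by
      rw [hkl1]
      rw [show -(n:ℝ) * -Real.log p = (n:ℝ) * Real.log p by ring, Real.exp_nat_mul,
        Real.exp_log hp.1]
    rw [htarget]
    have hbase : Tendsto (fun l : ℝ => (1 - p) * Real.exp (-l) + p) atTop (𝓝 p) := by
      have := (Real.tendsto_exp_neg_atTop_nhds_zero).const_mul (1 - p)
      have h2 := this.add_const p
      simpa using h2
    have ht : Tendsto (fun l : ℝ => ENNReal.ofReal (((1 - p) * Real.exp (-l) + p) ^ n)) atTop
        (𝓝 (ENNReal.ofReal (p ^ n))) :=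
      (ENNReal.continuous_ofReal.tendsto _).comp (hbase.pow n)
    refine ge_of_tendsto ht ?_
    filter_upwards [eventually_gt_atTop (0:ℝ)] with l hl
    refine (hkey l hl).trans (le_of_eq ?_)
    congr 1
    rw [hτn']
    rw [show -(l * (n:ℝ)) = (n:ℝ) * (-l) by ring, Real.exp_nat_mul, ← mul_pow]
    congr 1
    rw [Real.exp_neg]
    field_simp

/-- **Chernoff bound under adaptivity (upper tail).**  If `I₁, …, Iₙ` are `{0,1}`-valued,
`Iᵢ` is `𝓕ᵢ`-measurable, and `E[Iᵢ ∣ 𝓕_{i-1}] ≤ p` a.s. for all `i`, then for every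
integer `τ` with `n·p < τ ≤ n`, `μ(S ≥ τ) ≤ exp(−n · D(τ/n ‖ p))` where `S = Σᵢ Iᵢ`. -/
theorem chernoff_adaptive_upper_tail
    {Ω : Type*} {m0 : MeasurableSpace Ω} {μ : Measure Ω} [IsProbabilityMeasure μ]
    (n : ℕ) (𝓕 : Filtration ℕ m0) (I : ℕ → Ω → ℝ)
    (hbin : ∀ i ∈ Finset.Icc 1 n, ∀ ω, I i ω = 0 ∨ I i ω = 1)
    (hmeas : ∀ i ∈ Finset.Icc 1 n, Measurable[𝓕 i] (I i))
    (p : ℝ) (hp : p ∈ Set.Ioo (0 : ℝ) 1)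
    (hcond : ∀ i ∈ Finset.Icc 1 n, ∀ᵐ ω ∂μ, (μ[I i | 𝓕 (i - 1)]) ω ≤ p)
    (τ : ℤ) (hτ1 : (n : ℝ) * p < τ) (hτ2 : (τ : ℝ) ≤ n) :
    μ {ω | (τ : ℝ) ≤ ∑ i ∈ Finset.Icc 1 n, I i ω}
      ≤ ENNReal.ofReal (Real.exp (-(n : ℝ) * klBin ((τ : ℝ) / n) p)) := by
  have hn : 0 < n := by
    rcases Nat.eq_zero_or_pos n with h | h
    · exfalso
      subst h
      simp only [Nat.cast_zero, zero_mul] at hτ1 hτ2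
      exact absurd (hτ2.trans_lt (by exact_mod_cast hτ1)) (lt_irrefl _)
    · exact h
  refine opt_aux _ n hn p hp τ hτ1 hτ2 ?_
  intro l hl
  exact markov_aux n I p τ hbin hp
    (fun l' hl' => (mgf_bound_aux n 𝓕 I hbin hmeas p hp hcond l' hl' n le_rfl).1)
    (fun l' hl' => (mgf_bound_aux n 𝓕 I hbin hmeas p hp hcond l' hl' n le_rfl).2) l hl
end

section
/- Let (Ω, 𝓕, μ) be a probability space with a filtration 𝓕₀ ⊆ 𝓕₁ ⊆ … ⊆ 𝓕ₙ, and let I₁, …, Iₙ be {0,1}-valued random variables such that each Iᵢ is 𝓕ᵢ-measurable. Let p ∈ (0,1) and suppose that for every i ∈ {1,…,n} the conditional expectation satisfies E[Iᵢ ∣ 𝓕_{i-1}] ≥ p almost surely. Let S = Σ_{i=1}^n Iᵢ. Then for every integer τ with 0 < τ < n·p, μ(S ≤ τ) ≤ exp(−n · D(τ/n ‖ p)). -/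
open MeasureTheory Real

private lemma integrable_of_bdd' {Ω : Type*} {m0 : MeasurableSpace Ω} {μ : Measure Ω}
    [IsFiniteMeasure μ] {f : Ω → ℝ} (hf : AEStronglyMeasurable f μ) (C : ℝ)
    (h : ∀ ω, |f ω| ≤ C) : Integrable f μ :=
  (integrable_const C).mono' hf (Filter.Eventually.of_forall h)

/-- **Chernoff bound under adaptivity (lower tail).**  If `I₁, …, Iₙ` are `{0,1}`-valued,
`Iᵢ` is `𝓕ᵢ`-measurable, and `E[Iᵢ ∣ 𝓕_{i-1}] ≥ p` a.s. for all `i`, then for every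
integer `τ` with `0 < τ < n·p`, `μ(S ≤ τ) ≤ exp(−n · D(τ/n ‖ p))` where `S = Σᵢ Iᵢ`. -/
theorem chernoff_adaptive_lower_tail
    {Ω : Type*} {m0 : MeasurableSpace Ω} {μ : Measure Ω} [IsProbabilityMeasure μ]
    (n : ℕ) (𝓕 : Filtration ℕ m0) (I : ℕ → Ω → ℝ)
    (hbin : ∀ i ∈ Finset.Icc 1 n, ∀ ω, I i ω = 0 ∨ I i ω = 1)
    (hmeas : ∀ i ∈ Finset.Icc 1 n, Measurable[𝓕 i] (I i))
    (p : ℝ) (hp : p ∈ Set.Ioo (0 : ℝ) 1)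
    (hcond : ∀ i ∈ Finset.Icc 1 n, ∀ᵐ ω ∂μ, p ≤ (μ[I i | 𝓕 (i - 1)]) ω)
    (τ : ℤ) (hτ1 : 0 < τ) (hτ2 : (τ : ℝ) < (n : ℝ) * p) :
    μ {ω | ∑ i ∈ Finset.Icc 1 n, I i ω ≤ (τ : ℝ)}
      ≤ ENNReal.ofReal (Real.exp (-(n : ℝ) * klBin ((τ : ℝ) / n) p)) := by
  obtain ⟨hp0, hp1⟩ := hp
  have hn : 0 < (n : ℝ) := by
    by_contra h
    push_neg at h
    have : (n : ℝ) * p ≤ 0 := mul_nonpos_of_nonpos_of_nonneg h hp0.le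
    have : (0:ℝ) < (τ:ℝ) := by exact_mod_cast hτ1
    linarith
  set x : ℝ := (τ : ℝ) / n with hxdef
  have hτ0 : (0:ℝ) < (τ:ℝ) := by exact_mod_cast hτ1
  have hx0 : 0 < x := div_pos hτ0 hn
  have hxp : x < p := (div_lt_iff₀ hn).mpr (by linarith)
  have hx1 : x < 1 := lt_trans hxp hp1
  have h1x : 0 < 1 - x := by linarith
  have h1p : 0 < 1 - p := by linarith
  have hnx : (n : ℝ) * x = τ := by rw [hxdef]; field_simp [hn.ne']
  set r : ℝ := x * (1 - p) / ((1 - x) * p) with hrdef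
  have hr0 : 0 < r := div_pos (mul_pos hx0 h1p) (mul_pos h1x hp0)
  have hr1 : r < 1 := by
    rw [hrdef, div_lt_one (mul_pos h1x hp0)]
    nlinarith
  set q : ℝ := 1 - (1 - r) * p with hqdef
  have hq : q = (1 - p) / (1 - x) := by
    rw [hqdef, hrdef]
    field_simp
    ring
  have hq0 : 0 < q := by rw [hq]; positivity
  set g : ℕ → Ω → ℝ := fun i ω => 1 - (1 - r) * I i ω with hgdef
  set M : ℕ → Ω → ℝ := fun k ω => ∏ i ∈ Finset.Icc 1 k, g i ω with hMdef
  have hg_cases : ∀ i ∈ Finset.Icc 1 n, ∀ ω, g i ω = 1 ∨ g i ω = r := by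
    intro i hi ω
    rcases hbin i hi ω with h | h
    · left; simp [hgdef, h]
    · right; simp [hgdef, h]
  have hg_pos : ∀ i ∈ Finset.Icc 1 n, ∀ ω, 0 < g i ω := by
    intro i hi ω
    rcases hg_cases i hi ω with h | h <;> rw [h] <;> linarith
  have hg_le1 : ∀ i ∈ Finset.Icc 1 n, ∀ ω, g i ω ≤ 1 := by
    intro i hi ω
    rcases hg_cases i hi ω with h | h <;> rw [h] <;> linarith
  have hM_pos : ∀ k, k ≤ n → ∀ ω, 0 < M k ω := by
    intro k hk ω
    exact Finset.prod_pos fun i hi => hg_pos i (Finset.mem_Icc.mpr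
      ⟨(Finset.mem_Icc.mp hi).1, le_trans (Finset.mem_Icc.mp hi).2 hk⟩) ω
  have hM_le1 : ∀ k, k ≤ n → ∀ ω, M k ω ≤ 1 := by
    intro k hk ω
    refine Finset.prod_le_one (fun i hi => ?_) (fun i hi => ?_)
    · exact (hg_pos i (Finset.mem_Icc.mpr
        ⟨(Finset.mem_Icc.mp hi).1, le_trans (Finset.mem_Icc.mp hi).2 hk⟩) ω).le
    · exact hg_le1 i (Finset.mem_Icc.mpr
        ⟨(Finset.mem_Icc.mp hi).1, le_trans (Finset.mem_Icc.mp hi).2 hk⟩) ω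
  have hM_meas : ∀ k, k ≤ n → Measurable[𝓕 k] (M k) := by
    intro k hk
    apply Finset.measurable_prod
    intro i hi
    have hik : i ≤ k := (Finset.mem_Icc.mp hi).2
    have : Measurable[𝓕 i] (g i) := by
      exact (measurable_const.sub ((hmeas i (Finset.mem_Icc.mpr
        ⟨(Finset.mem_Icc.mp hi).1, le_trans hik hk⟩)).const_mul (1 - r)))
    exact this.mono (𝓕.mono hik) le_rfl
  have hM_meas0 : ∀ k, k ≤ n → Measurable (M k) := fun k hk =>
    (hM_meas k hk).mono (𝓕.le k) le_rfl
  have hM_int : ∀ k, k ≤ n → Integrable (M k) μ := by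
    intro k hk
    refine integrable_of_bdd' (hM_meas0 k hk).aestronglyMeasurable 1 fun ω => ?_
    rw [abs_of_pos (hM_pos k hk ω)]
    exact hM_le1 k hk ω
  -- key induction
  have hkey : ∀ k, k ≤ n → ∫ ω, M k ω ∂μ ≤ q ^ k := by
    intro k
    induction k with
    | zero =>
      intro _
      simp [hMdef]
    | succ k ih =>
      intro hk1
      have hk : k ≤ n := Nat.le_of_succ_le hk1
      have ihk := ih hk
      have hmem : k + 1 ∈ Finset.Icc 1 n := Finset.mem_Icc.mpr ⟨Nat.succ_le_succ (Nat.zero_le k), hk1⟩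
      have hIm : Measurable (I (k+1)) := (hmeas (k+1) hmem).mono (𝓕.le (k+1)) le_rfl
      have hI_bd : ∀ ω, |I (k+1) ω| ≤ 1 := by
        intro ω; rcases hbin (k+1) hmem ω with h | h <;> rw [h] <;> norm_num
      have hI_int : Integrable (I (k+1)) μ :=
        integrable_of_bdd' hIm.aestronglyMeasurable 1 hI_bd
      have hMI_int : Integrable (M k * I (k+1)) μ := by
        refine integrable_of_bdd' ((hM_meas0 k hk).mul hIm).aestronglyMeasurable 1 fun ω => ?_
        have h1 : |M k ω| ≤ 1 := by rw [abs_of_pos (hM_pos k hk ω)]; exact hM_le1 k hk ω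
        calc |(M k * I (k+1)) ω| = |M k ω| * |I (k+1) ω| := abs_mul _ _
          _ ≤ 1 * 1 := mul_le_mul h1 (hI_bd ω) (abs_nonneg _) zero_le_one
          _ = 1 := one_mul 1
      have hce : μ[M k * I (k+1) | 𝓕 k] =ᵐ[μ] M k * μ[I (k+1) | 𝓕 k] :=
        condExp_mul_of_stronglyMeasurable_left (hM_meas k hk).stronglyMeasurable hMI_int hI_int
      have hcond' : ∀ᵐ ω ∂μ, p ≤ (μ[I (k+1) | 𝓕 k]) ω := by
        have := hcond (k+1) hmem
        simpa using this
      have hce_int : Integrable (fun ω => M k ω * (μ[I (k+1) | 𝓕 k]) ω) μ := by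
        refine Integrable.bdd_mul (c := 1) integrable_condExp (hM_meas0 k hk).aestronglyMeasurable (Filter.Eventually.of_forall fun ω => ?_)
        rw [Real.norm_eq_abs, abs_of_pos (hM_pos k hk ω)]; exact hM_le1 k hk ω
      have hstep : p * ∫ ω, M k ω ∂μ ≤ ∫ ω, (M k * I (k+1)) ω ∂μ := by
        have h1 : ∫ ω, (M k * I (k+1)) ω ∂μ = ∫ ω, (μ[M k * I (k+1) | 𝓕 k]) ω ∂μ :=
          (integral_condExp (𝓕.le k)).symm
        have h2 : ∫ ω, (μ[M k * I (k+1) | 𝓕 k]) ω ∂μ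
            = ∫ ω, M k ω * (μ[I (k+1) | 𝓕 k]) ω ∂μ := integral_congr_ae hce
        have h3 : ∫ ω, p * M k ω ∂μ ≤ ∫ ω, M k ω * (μ[I (k+1) | 𝓕 k]) ω ∂μ := by
          refine integral_mono_ae ((hM_int k hk).const_mul p) hce_int ?_
          filter_upwards [hcond'] with ω hω
          calc p * M k ω = M k ω * p := mul_comm _ _
            _ ≤ M k ω * (μ[I (k+1) | 𝓕 k]) ω :=
              mul_le_mul_of_nonneg_left hω (hM_pos k hk ω).le
        rw [h1, h2, ← integral_const_mul _ _]
        exact h3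
      have hMsucc : ∀ ω, M (k+1) ω = M k ω - (1 - r) * ((M k * I (k+1)) ω) := by
        intro ω
        simp only [hMdef, Finset.prod_Icc_succ_top (Nat.le_add_left 1 k), hgdef, Pi.mul_apply]
        ring
      have hint_eq : ∫ ω, M (k+1) ω ∂μ
          = ∫ ω, M k ω ∂μ - (1 - r) * ∫ ω, (M k * I (k+1)) ω ∂μ := by
        rw [show (fun ω => M (k+1) ω) = fun ω => M k ω - (1 - r) * ((M k * I (k+1)) ω) from
          funext hMsucc]
        rw [integral_sub (hM_int k hk) (hMI_int.const_mul (1 - r)), integral_const_mul _ _]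
      have h1r : (0:ℝ) ≤ 1 - r := by linarith
      have hMk_nonneg : 0 ≤ ∫ ω, M k ω ∂μ := integral_nonneg fun ω => (hM_pos k hk ω).le
      calc ∫ ω, M (k+1) ω ∂μ
          = ∫ ω, M k ω ∂μ - (1 - r) * ∫ ω, (M k * I (k+1)) ω ∂μ := hint_eq
        _ ≤ ∫ ω, M k ω ∂μ - (1 - r) * (p * ∫ ω, M k ω ∂μ) := by
            have := mul_le_mul_of_nonneg_left hstep h1r
            linarith
        _ = q * ∫ ω, M k ω ∂μ := by rw [hqdef]; ring
        _ ≤ q * q ^ k := mul_le_mul_of_nonneg_left ihk hq0.le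
        _ = q ^ (k+1) := (pow_succ' q k).symm
  -- Markov step
  set ε : ℝ := Real.exp ((τ:ℝ) * Real.log r) with hεdef
  have hε0 : 0 < ε := Real.exp_pos _
  have hlogr : Real.log r ≤ 0 := Real.log_nonpos hr0.le hr1.le
  have hsub : {ω | ∑ i ∈ Finset.Icc 1 n, I i ω ≤ (τ : ℝ)} ⊆ {ω | ε ≤ M n ω} := by
    intro ω hω
    simp only [Set.mem_setOf_eq] at hω ⊢
    have hMeq : M n ω = Real.exp (Real.log r * ∑ i ∈ Finset.Icc 1 n, I i ω) := by
      rw [Finset.mul_sum, Real.exp_sum]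
      refine Finset.prod_congr rfl fun i hi => ?_
      rcases hbin i hi ω with h | h
      · simp [hgdef, h]
      · simp [hgdef, h, Real.exp_log hr0]
    rw [hMeq, hεdef]
    apply Real.exp_le_exp.mpr
    calc (τ:ℝ) * Real.log r = Real.log r * (τ:ℝ) := mul_comm _ _
      _ ≤ Real.log r * ∑ i ∈ Finset.Icc 1 n, I i ω := mul_le_mul_of_nonpos_left hω hlogr
  have hmono := measure_mono (μ := μ) hsub
  have hMn_nonneg : 0 ≤ᵐ[μ] M n := Filter.Eventually.of_forall fun ω => (hM_pos n le_rfl ω).le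
  have hmarkov : ε * (μ {ω | ε ≤ M n ω}).toReal ≤ ∫ ω, M n ω ∂μ :=
    mul_meas_ge_le_integral_of_nonneg hMn_nonneg (hM_int n le_rfl) ε
  have hfinal_real : (μ {ω | ∑ i ∈ Finset.Icc 1 n, I i ω ≤ (τ : ℝ)}).toReal ≤ q ^ n / ε := by
    rw [le_div_iff₀ hε0]
    calc (μ {ω | ∑ i ∈ Finset.Icc 1 n, I i ω ≤ (τ : ℝ)}).toReal * ε
        ≤ (μ {ω | ε ≤ M n ω}).toReal * ε := by
          apply mul_le_mul_of_nonneg_right _ hε0.le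
          exact ENNReal.toReal_mono (measure_ne_top μ _) hmono
      _ = ε * (μ {ω | ε ≤ M n ω}).toReal := mul_comm _ _
      _ ≤ ∫ ω, M n ω ∂μ := hmarkov
      _ ≤ q ^ n := hkey n le_rfl
  -- identify the bound
  have hq_exp : q ^ n / ε = Real.exp (-(n : ℝ) * klBin x p) := by
    have hqpow : q ^ n = Real.exp ((n:ℝ) * Real.log q) := by
      rw [Real.exp_nat_mul, Real.exp_log hq0]
    rw [hqpow, hεdef, ← Real.exp_sub]
    congr 1
    have hlq : Real.log q = Real.log (1 - p) - Real.log (1 - x) := by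
      rw [hq, Real.log_div h1p.ne' h1x.ne']
    have hlr : Real.log r = Real.log x + Real.log (1 - p)
        - (Real.log (1 - x) + Real.log p) := by
      rw [hrdef, Real.log_div (mul_pos hx0 h1p).ne' (mul_pos h1x hp0).ne',
        Real.log_mul hx0.ne' h1p.ne', Real.log_mul h1x.ne' hp0.ne']
    have hkl : klBin x p = x * (Real.log x - Real.log p)
        + (1 - x) * (Real.log (1 - x) - Real.log (1 - p)) := by
      rw [klBin, Real.log_div hx0.ne' hp0.ne', Real.log_div h1x.ne' h1p.ne']
    rw [hlq, hlr, hkl, ← hnx]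
    ring
  calc μ {ω | ∑ i ∈ Finset.Icc 1 n, I i ω ≤ (τ : ℝ)}
      = ENNReal.ofReal (μ {ω | ∑ i ∈ Finset.Icc 1 n, I i ω ≤ (τ : ℝ)}).toReal :=
        (ENNReal.ofReal_toReal (measure_ne_top μ _)).symm
    _ ≤ ENNReal.ofReal (q ^ n / ε) := ENNReal.ofReal_le_ofReal hfinal_real
    _ = ENNReal.ofReal (Real.exp (-(n : ℝ) * klBin x p)) := by rw [hq_exp]
end

section
/- Let n ≥ 1, let p ∈ (0,1), and let S be a binomial random variable with parameters n and p (i.e. S is distributed as PMF.binomial p n, the sum of n i.i.d. Bernoulli(p) indicators). Then for every integer τ with n·p < τ ≤ n, the probability that S ≥ τ is at most exp(−n · D(τ/n ‖ p)). -/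
open MeasureTheory Real

private lemma tail_bound_real (n t : ℕ) (p : ℝ) (hp0 : 0 < p) (hp1 : p < 1)
    (ht1 : (n : ℝ) * p < t) (ht2 : t ≤ n) :
    ∑ k ∈ Finset.range (n + 1),
        (if t ≤ k then p ^ k * (1 - p) ^ (n - k) * (n.choose k : ℝ) else 0)
      ≤ Real.exp (-(n : ℝ) * klBin ((t : ℝ) / n) p) := by
  have hn : 0 < n := by
    rcases Nat.eq_zero_or_pos n with h | h
    · exfalso; subst h
      have ht0 : t = 0 := Nat.le_zero.mp ht2
      subst ht0; norm_num at ht1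
    · exact h
  have hnR : (0 : ℝ) < n := by exact_mod_cast hn
  have h1p : (0 : ℝ) < 1 - p := by linarith
  rcases eq_or_lt_of_le ht2 with rfl | htn
  · -- t = n case
    rw [Finset.sum_eq_single_of_mem t (by simp)]
    · simp only [le_refl, if_pos, Nat.sub_self, pow_zero, Nat.choose_self, Nat.cast_one,
        mul_one]
      have hq1 : (t : ℝ) / t = 1 := div_self (by positivity)
      rw [hq1]
      have : klBin 1 p = -Real.log p := by
        simp [klBin, Real.log_div, Real.log_one, hp0.ne']
      rw [this]
      have : -(t : ℝ) * -Real.log p = (t : ℝ) * Real.log p := by ring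
      rw [this, Real.exp_nat_mul, Real.exp_log hp0]
    · intro k hk hkt
      rw [Finset.mem_range] at hk
      have : ¬ t ≤ k := fun h => hkt (le_antisymm (Nat.lt_succ_iff.mp hk) h)
      simp [this]
  · -- t < n case
    set q : ℝ := (t : ℝ) / n with hqdef
    have hq1 : q < 1 := by
      rw [div_lt_one hnR]; exact_mod_cast htn
    have hpq : p < q := by
      rw [lt_div_iff₀ hnR]; linarith [ht1]
    have hq0 : 0 < q := lt_trans hp0 hpq
    have h1q : (0 : ℝ) < 1 - q := by linarith
    set r : ℝ := q * (1 - p) / (p * (1 - q)) with hrdef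
    have hr0 : 0 < r := by positivity
    have hr1 : 1 ≤ r := by
      rw [le_div_iff₀ (by positivity)]
      nlinarith
    have htq : (t : ℝ) = n * q := by
      rw [hqdef]; field_simp
    -- Step A: bound each term
    have stepA : ∑ k ∈ Finset.range (n + 1),
          (if t ≤ k then p ^ k * (1 - p) ^ (n - k) * (n.choose k : ℝ) else 0)
        ≤ (∑ k ∈ Finset.range (n + 1), (p * r) ^ k * (1 - p) ^ (n - k) * (n.choose k : ℝ))
            / r ^ t := by
      rw [Finset.sum_div]
      apply Finset.sum_le_sum
      intro k _
      by_cases hk : t ≤ k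
      · rw [if_pos hk, le_div_iff₀ (by positivity), mul_pow]
        have hrt : r ^ t ≤ r ^ k := pow_le_pow_right₀ hr1 hk
        calc p ^ k * (1 - p) ^ (n - k) * (n.choose k : ℝ) * r ^ t
            ≤ p ^ k * (1 - p) ^ (n - k) * (n.choose k : ℝ) * r ^ k := by
              apply mul_le_mul_of_nonneg_left hrt; positivity
          _ = p ^ k * r ^ k * (1 - p) ^ (n - k) * (n.choose k : ℝ) := by ring
      · rw [if_neg hk]; positivity
    -- Step B+C: binomial theorem and simplification
    have stepB : ∑ k ∈ Finset.range (n + 1), (p * r) ^ k * (1 - p) ^ (n - k) * (n.choose k : ℝ)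
        = ((1 - p) / (1 - q)) ^ n := by
      rw [← add_pow]
      congr 1
      rw [hrdef]
      field_simp
      ring
    -- Step D: the closed form equals the exponential
    have stepD : ((1 - p) / (1 - q)) ^ n / r ^ t
        = Real.exp (-(n : ℝ) * klBin q p) := by
      have hb0 : (0 : ℝ) < (1 - p) / (1 - q) := by positivity
      have hlog : Real.log r = Real.log q + Real.log (1 - p) - (Real.log p + Real.log (1 - q)) := by
        rw [hrdef, Real.log_div (by positivity) (by positivity),
          Real.log_mul hq0.ne' h1p.ne', Real.log_mul hp0.ne' h1q.ne']
      have hexp : -(n : ℝ) * klBin q p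
          = n * Real.log ((1 - p) / (1 - q)) - t * Real.log r := by
        rw [klBin, hlog, Real.log_div h1p.ne' h1q.ne', Real.log_div hq0.ne' hp0.ne',
          Real.log_div h1q.ne' h1p.ne', htq]
        ring
      rw [hexp, Real.exp_sub]
      congr 1
      · rw [← Real.log_pow, Real.exp_log (by positivity)]
      · rw [← Real.log_pow, Real.exp_log (by positivity)]
    calc ∑ k ∈ Finset.range (n + 1),
          (if t ≤ k then p ^ k * (1 - p) ^ (n - k) * (n.choose k : ℝ) else 0)
        ≤ (∑ k ∈ Finset.range (n + 1), (p * r) ^ k * (1 - p) ^ (n - k) * (n.choose k : ℝ))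
            / r ^ t := stepA
      _ = ((1 - p) / (1 - q)) ^ n / r ^ t := by rw [stepB]
      _ = Real.exp (-(n : ℝ) * klBin q p) := stepD

/-- **Binomial upper-tail Chernoff bound.**  If `S ∼ Bin(n, p)` (i.e. `S` is distributed as
`PMF.binomial p n`), then for every integer `τ` with `n·p < τ ≤ n`,
`Pr[S ≥ τ] ≤ exp(−n · D(τ/n ‖ p))`. -/
theorem binomial_upper_tail
    (n : ℕ) (hn : 1 ≤ n) (p : ℝ) (hp : p ∈ Set.Ioo (0 : ℝ) 1)
    (hp1 : ENNReal.ofReal p ≤ 1)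
    (τ : ℤ) (hτ1 : (n : ℝ) * p < τ) (hτ2 : (τ : ℝ) ≤ n) :
    (PMF.binomial (Real.toNNReal p) (ENNReal.coe_le_one_iff.mp hp1) n).toMeasure {k : Fin (n + 1) | τ ≤ ((k : ℕ) : ℤ)}
      ≤ ENNReal.ofReal (Real.exp (-(n : ℝ) * klBin ((τ : ℝ) / n) p)) := by
  obtain ⟨hp0, hp1r⟩ := hp
  have hτpos : (0 : ℝ) < (τ : ℝ) := by
    have : (0 : ℝ) < (n : ℝ) * p := by
      have : (1 : ℝ) ≤ n := by exact_mod_cast hn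
      positivity
    linarith
  have hτ0 : 0 ≤ τ := by exact_mod_cast hτpos.le
  set t := τ.toNat with htdef
  have htτ : (t : ℤ) = τ := Int.toNat_of_nonneg hτ0
  have htR : (t : ℝ) = (τ : ℝ) := by exact_mod_cast congrArg (Int.cast : ℤ → ℝ) htτ
  have h1p : (1 : ENNReal) - ENNReal.ofReal p = ENNReal.ofReal (1 - p) := by
    rw [← ENNReal.ofReal_one, ← ENNReal.ofReal_sub _ hp0.le]
  rw [PMF.toMeasure_apply_fintype]
  have hsum : ∑ k : Fin (n + 1),
        ({k : Fin (n + 1) | τ ≤ ((k : ℕ) : ℤ)}.indicator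
          (PMF.binomial (Real.toNNReal p) (ENNReal.coe_le_one_iff.mp hp1) n) k)
      = ENNReal.ofReal (∑ k : Fin (n + 1),
          (if t ≤ (k : ℕ) then p ^ (k : ℕ) * (1 - p) ^ (n - (k : ℕ)) * (n.choose k : ℝ)
            else 0)) := by
    rw [ENNReal.ofReal_sum_of_nonneg]
    · apply Finset.sum_congr rfl
      intro k _
      rw [Set.indicator_apply]
      have hmem : (k ∈ {k : Fin (n + 1) | τ ≤ ((k : ℕ) : ℤ)}) ↔ t ≤ (k : ℕ) := by
        simp only [Set.mem_setOf_eq, ← htτ, Int.ofNat_le]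
      rw [PMF.binomial_apply]
      have h1p' : (0:ℝ) ≤ 1 - p := by linarith
      by_cases h : t ≤ (k : ℕ)
      · have e : ((Real.toNNReal p : NNReal) : ENNReal) = ENNReal.ofReal p := rfl
        rw [if_pos (hmem.mpr h), if_pos h, Fin.val_last, e, h1p, ← ENNReal.ofReal_pow hp0.le,
          ← ENNReal.ofReal_pow h1p', ← ENNReal.ofReal_natCast,
          ← ENNReal.ofReal_mul (by positivity), ← ENNReal.ofReal_mul (by positivity)]
      · rw [if_neg (fun hc => h (hmem.mp hc)), if_neg h, ENNReal.ofReal_zero]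
    · intro k _
      have h1p' : (0:ℝ) ≤ 1 - p := by linarith
      by_cases h : t ≤ (k : ℕ) <;> simp [h] <;> positivity
  rw [hsum]
  apply ENNReal.ofReal_le_ofReal
  have hrange : ∑ k : Fin (n + 1),
        (if t ≤ (k : ℕ) then p ^ (k : ℕ) * (1 - p) ^ (n - (k : ℕ)) * (n.choose (k : ℕ) : ℝ)
          else 0)
      = ∑ k ∈ Finset.range (n + 1),
          (if t ≤ k then p ^ k * (1 - p) ^ (n - k) * (n.choose k : ℝ) else 0) :=
    Fin.sum_univ_eq_sum_range
      (fun k => if t ≤ k then p ^ k * (1 - p) ^ (n - k) * (n.choose k : ℝ) else 0) (n + 1)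
  rw [hrange, ← htR]
  exact tail_bound_real n t p hp0 hp1r (by rw [htR]; exact hτ1)
    (by exact_mod_cast htR.trans_le hτ2)
end

section
/- Let (Ω, 𝓕, μ) be a probability space with a filtration 𝓕₀ ⊆ 𝓕₁ ⊆ … ⊆ 𝓕ₙ, and let I₁, …, Iₙ be {0,1}-valued random variables with each Iᵢ 𝓕ᵢ-measurable, satisfying E[Iᵢ ∣ 𝓕_{i-1}] ≤ 1/2 almost surely for every i (the per-round distance-fraud bound). Let S = Σ_{i=1}^n Iᵢ. Then for every integer τ with n/2 < τ ≤ n, μ(S ≥ τ) ≤ exp(−n · D(τ/n ‖ 1/2)). -/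
open MeasureTheory Real

lemma prod_supermartingale_bound
    {Ω : Type*} {m0 : MeasurableSpace Ω} {μ : Measure Ω} [IsProbabilityMeasure μ]
    (𝓕 : Filtration ℕ m0) (I : ℕ → Ω → ℝ) (a b : ℝ) (ha : 0 ≤ a) (hb : 0 ≤ b)
    (n : ℕ)
    (hbin : ∀ i ∈ Finset.Icc 1 n, ∀ ω, I i ω = 0 ∨ I i ω = 1)
    (hmeas : ∀ i ∈ Finset.Icc 1 n, Measurable[𝓕 i] (I i))
    (hcond : ∀ i ∈ Finset.Icc 1 n, ∀ᵐ ω ∂μ, (μ[I i | 𝓕 (i - 1)]) ω ≤ 1 / 2) :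
    Integrable (fun ω => ∏ i ∈ Finset.Icc 1 n, (a + b * I i ω)) μ ∧
      ∫ ω, ∏ i ∈ Finset.Icc 1 n, (a + b * I i ω) ∂μ ≤ (a + b / 2) ^ n := by
  induction n with
  | zero => simp
  | succ k IH =>
    have hsub : Finset.Icc 1 k ⊆ Finset.Icc 1 (k + 1) := by
      apply Finset.Icc_subset_Icc_right; omega
    obtain ⟨hPint, hIH⟩ := IH (fun i hi => hbin i (hsub hi)) (fun i hi => hmeas i (hsub hi))
      (fun i hi => hcond i (hsub hi))
    set P : Ω → ℝ := fun ω => ∏ i ∈ Finset.Icc 1 k, (a + b * I i ω) with hP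
    set g : Ω → ℝ := fun ω => a + b * I (k + 1) ω with hg
    have hmem : k + 1 ∈ Finset.Icc 1 (k + 1) := by simp
    have hIbin := hbin (k + 1) hmem
    have hfac_bound : ∀ i ∈ Finset.Icc 1 (k+1), ∀ ω, 0 ≤ a + b * I i ω ∧ a + b * I i ω ≤ a + b := by
      intro i hi ω
      rcases hbin i hi ω with h | h <;> rw [h] <;> constructor <;> nlinarith
    have hP_nonneg : ∀ ω, 0 ≤ P ω := fun ω =>
      Finset.prod_nonneg fun i hi => (hfac_bound i (hsub hi) ω).1
    have hP_le : ∀ ω, P ω ≤ (a + b) ^ k := by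
      intro ω
      calc P ω ≤ ∏ i ∈ Finset.Icc 1 k, (a + b) :=
            Finset.prod_le_prod (fun i hi => (hfac_bound i (hsub hi) ω).1)
              (fun i hi => (hfac_bound i (hsub hi) ω).2)
        _ = (a + b) ^ k := by rw [Finset.prod_const, Nat.card_Icc]; norm_num
    have hPsm : StronglyMeasurable[𝓕 k] P := by
      apply Finset.stronglyMeasurable_fun_prod
      intro i hi
      have him : Measurable[𝓕 k] (I i) :=
        (hmeas i (hsub hi)).mono (𝓕.mono (Finset.mem_Icc.mp hi).2) le_rfl
      exact ((him.const_mul b).const_add a).stronglyMeasurable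
    have hIm : Measurable (I (k+1)) := (hmeas (k+1) hmem).mono (𝓕.le _) le_rfl
    have hgm : Measurable g := (hIm.const_mul b).const_add a
    have hPm : Measurable P := hPsm.measurable.mono (𝓕.le k) le_rfl
    have hIint : Integrable (I (k+1)) μ := by
      refine (integrable_const (1 : ℝ)).mono' hIm.aestronglyMeasurable ?_
      filter_upwards with ω
      rcases hIbin ω with h | h <;> simp [h]
    have hgint : Integrable g μ :=
      ((integrable_const a).add (hIint.const_mul b)).congr
        (by filter_upwards with ω; simp [hg])
    have hPg_int : Integrable (P * g) μ := by
      refine (integrable_const ((a + b) ^ (k+1) : ℝ)).mono'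
        (hPm.mul hgm).aestronglyMeasurable ?_
      filter_upwards with ω
      have h1 := hP_nonneg ω
      have h2 := hP_le ω
      have h3 := (hfac_bound (k+1) hmem ω).1
      have h4 := (hfac_bound (k+1) hmem ω).2
      rw [Pi.mul_apply, Real.norm_eq_abs, abs_of_nonneg (mul_nonneg h1 h3), pow_succ]
      exact mul_le_mul h2 h4 h3 (by positivity)
    -- conditional expectation bound for g
    have hcond' : ∀ᵐ ω ∂μ, (μ[I (k+1) | 𝓕 k]) ω ≤ 1 / 2 := by
      have := hcond (k+1) hmem
      simpa using this
    have hg_eq : μ[g | 𝓕 k] =ᵐ[μ] fun ω => a + b * (μ[I (k+1) | 𝓕 k]) ω := by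
      have hgrw : g = (fun _ : Ω => a) + b • I (k+1) := by
        funext ω; simp [hg, smul_eq_mul]
      rw [hgrw]
      calc μ[(fun _ : Ω => a) + b • I (k+1) | 𝓕 k]
          =ᵐ[μ] μ[(fun _ : Ω => a) | 𝓕 k] + μ[b • I (k+1) | 𝓕 k] :=
            condExp_add (integrable_const a) (hIint.smul b) _
        _ =ᵐ[μ] fun ω => a + b * (μ[I (k+1) | 𝓕 k]) ω := by
            have h1 := condExp_const (𝓕.le k) a (μ := μ)
            have h2 : μ[b • I (k+1) | 𝓕 k] =ᵐ[μ] b • μ[I (k+1) | 𝓕 k] := condExp_smul b (I (k+1)) _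
            filter_upwards [h2] with ω hω
            simp [h1, hω, smul_eq_mul]
    have hg_le : ∀ᵐ ω ∂μ, (μ[g | 𝓕 k]) ω ≤ a + b / 2 := by
      filter_upwards [hg_eq, hcond'] with ω h1 h2
      rw [h1]; nlinarith
    have hmul : μ[P * g | 𝓕 k] =ᵐ[μ] P * μ[g | 𝓕 k] :=
      condExp_mul_of_stronglyMeasurable_left hPsm hPg_int hgint
    have hprod_rw : (fun ω => ∏ i ∈ Finset.Icc 1 (k+1), (a + b * I i ω)) = P * g := by
      funext ω
      rw [Pi.mul_apply, hP, hg]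
      exact Finset.prod_Icc_succ_top (by omega) _
    rw [hprod_rw]
    refine ⟨hPg_int, ?_⟩
    have step1 : ∫ ω, (P * g) ω ∂μ = ∫ ω, (μ[P * g | 𝓕 k]) ω ∂μ :=
      (integral_condExp (𝓕.le k)).symm
    have step2 : ∫ ω, (μ[P * g | 𝓕 k]) ω ∂μ = ∫ ω, P ω * (μ[g | 𝓕 k]) ω ∂μ :=
      integral_congr_ae hmul
    have step3 : ∫ ω, P ω * (μ[g | 𝓕 k]) ω ∂μ ≤ ∫ ω, P ω * (a + b / 2) ∂μ := by
      refine integral_mono_ae (integrable_condExp.congr hmul) (hPint.mul_const _) ?_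
      filter_upwards [hg_le] with ω hω
      exact mul_le_mul_of_nonneg_left hω (hP_nonneg ω)
    have step4 : ∫ ω, P ω * (a + b / 2) ∂μ = (∫ ω, P ω ∂μ) * (a + b / 2) :=
      integral_mul_const _ _
    calc ∫ ω, (P * g) ω ∂μ ≤ (∫ ω, P ω ∂μ) * (a + b / 2) := by
          rw [step1, step2, ← step4]; exact step3
      _ ≤ (a + b / 2) ^ k * (a + b / 2) :=
          mul_le_mul_of_nonneg_right hIH (by positivity)
      _ = (a + b / 2) ^ (k + 1) := (pow_succ _ _).symm
/-- **Distance-fraud multi-round bound.**  If each round's acceptance indicator `Iᵢ` is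
`{0,1}`-valued, `𝓕ᵢ`-measurable, and satisfies `E[Iᵢ ∣ 𝓕_{i-1}] ≤ 1/2` a.s. (the per-round
distance-fraud bound), then for every integer `τ` with `n/2 < τ ≤ n`,
`μ(S ≥ τ) ≤ exp(−n · D(τ/n ‖ 1/2))` where `S` is the number of accepted rounds. -/
theorem distance_fraud_multi_round
    {Ω : Type*} {m0 : MeasurableSpace Ω} {μ : Measure Ω} [IsProbabilityMeasure μ]
    (n : ℕ) (𝓕 : Filtration ℕ m0) (I : ℕ → Ω → ℝ)
    (hbin : ∀ i ∈ Finset.Icc 1 n, ∀ ω, I i ω = 0 ∨ I i ω = 1)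
    (hmeas : ∀ i ∈ Finset.Icc 1 n, Measurable[𝓕 i] (I i))
    (hcond : ∀ i ∈ Finset.Icc 1 n, ∀ᵐ ω ∂μ, (μ[I i | 𝓕 (i - 1)]) ω ≤ 1 / 2)
    (τ : ℤ) (hτ1 : (n : ℝ) / 2 < τ) (hτ2 : (τ : ℝ) ≤ n) :
    μ {ω | (τ : ℝ) ≤ ∑ i ∈ Finset.Icc 1 n, I i ω}
      ≤ ENNReal.ofReal (Real.exp (-(n : ℝ) * klBin ((τ : ℝ) / n) (1 / 2))) := by
  have hn : 0 < n := by
    rcases Nat.eq_zero_or_pos n with h | h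
    · subst h
      push_cast at hτ1 hτ2
      linarith
    · exact h
  have hnR : (0 : ℝ) < n := by exact_mod_cast hn
  rcases eq_or_lt_of_le hτ2 with heq | hlt
  · -- τ = n : all rounds must be accepted
    obtain ⟨hint, hbound⟩ := prod_supermartingale_bound 𝓕 I 0 1 le_rfl zero_le_one n
      hbin hmeas hcond
    simp only [zero_add, one_mul] at hint hbound
    have hsubset : {ω | (τ : ℝ) ≤ ∑ i ∈ Finset.Icc 1 n, I i ω}
        ⊆ {ω | (1 : ℝ) ≤ ∏ i ∈ Finset.Icc 1 n, I i ω} := by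
      intro ω hω
      simp only [Set.mem_setOf_eq] at hω ⊢
      have hall : ∀ i ∈ Finset.Icc 1 n, I i ω = 1 := by
        intro j hj
        rcases hbin j hj ω with h0 | h1
        · exfalso
          have hsum : ∑ i ∈ Finset.Icc 1 n, I i ω
              = I j ω + ∑ i ∈ (Finset.Icc 1 n).erase j, I i ω :=
            (Finset.add_sum_erase _ _ hj).symm
          have hle : ∑ i ∈ (Finset.Icc 1 n).erase j, I i ω
              ≤ ((Finset.Icc 1 n).erase j).card • (1 : ℝ) := by
            apply Finset.sum_le_card_nsmul
            intro i hi
            rcases hbin i (Finset.mem_of_mem_erase hi) ω with h | h <;> simp [h]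
          have hcard : ((Finset.Icc 1 n).erase j).card = n - 1 := by
            rw [Finset.card_erase_of_mem hj, Nat.card_Icc]
            omega
          rw [hcard] at hle
          have hcast : ((n - 1 : ℕ) : ℝ) = (n : ℝ) - 1 := by
            push_cast [Nat.cast_sub hn]; ring
          rw [nsmul_eq_mul, mul_one, hcast] at hle
          have : (τ : ℝ) ≤ (n : ℝ) - 1 := by rw [hsum, h0] at hω; linarith
          linarith [heq]
        · exact h1
      rw [Finset.prod_eq_one hall]
    have hmarkov := mul_meas_ge_le_integral_of_nonneg
      (f := fun ω => ∏ i ∈ Finset.Icc 1 n, I i ω)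
      (ae_of_all _ fun ω => Finset.prod_nonneg fun i hi =>
        by rcases hbin i hi ω with h | h <;> simp [h])
      hint 1
    rw [one_mul] at hmarkov
    have htoReal : (μ {ω | (1:ℝ) ≤ ∏ i ∈ Finset.Icc 1 n, I i ω}).toReal ≤ (1/2 : ℝ) ^ n :=
      le_trans hmarkov hbound
    have hkl : klBin ((τ : ℝ) / n) (1/2) = Real.log 2 := by
      rw [heq, div_self (ne_of_gt hnR)]
      norm_num [klBin]
    have hexp : Real.exp (-(n : ℝ) * Real.log 2) = (1/2 : ℝ) ^ n := by
      rw [show (-(n:ℝ) * Real.log 2) = (n : ℝ) * (-Real.log 2) by ring,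
        Real.exp_nat_mul, Real.exp_neg, Real.exp_log (by norm_num : (0:ℝ) < 2)]
      norm_num
    calc μ {ω | (τ : ℝ) ≤ ∑ i ∈ Finset.Icc 1 n, I i ω}
        ≤ μ {ω | (1:ℝ) ≤ ∏ i ∈ Finset.Icc 1 n, I i ω} := measure_mono hsubset
      _ = ENNReal.ofReal ((μ {ω | (1:ℝ) ≤ ∏ i ∈ Finset.Icc 1 n, I i ω}).toReal) :=
          (ENNReal.ofReal_toReal (measure_ne_top _ _)).symm
      _ ≤ ENNReal.ofReal (Real.exp (-(n : ℝ) * klBin ((τ : ℝ) / n) (1/2))) := by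
          rw [hkl, hexp]; exact ENNReal.ofReal_le_ofReal htoReal
  · -- τ < n : optimize the exponential moment
    set u : ℝ := (τ : ℝ) / n with hu
    have hu1 : 1/2 < u := by rw [hu, lt_div_iff₀ hnR]; linarith
    have hu2 : u < 1 := by rw [hu, div_lt_one hnR]; exact hlt
    have hu0 : 0 < u := by linarith
    have h1u : 0 < 1 - u := by linarith
    set r : ℝ := u / (1 - u) with hr
    have hr0 : 0 < r := div_pos hu0 h1u
    have hr1 : 1 ≤ r := by rw [hr, le_div_iff₀ h1u]; linarith
    set lam : ℝ := Real.log r with hlam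
    have hlam0 : 0 ≤ lam := Real.log_nonneg hr1
    obtain ⟨hint, hbound⟩ := prod_supermartingale_bound 𝓕 I 1 (r - 1) zero_le_one
      (by linarith) n hbin hmeas hcond
    have hc : (1 + (r - 1) / 2) = (1 + r) / 2 := by ring
    rw [hc] at hbound
    have hfactor : ∀ i ∈ Finset.Icc 1 n, ∀ ω,
        1 + (r - 1) * I i ω = Real.exp (lam * I i ω) := by
      intro i hi ω
      rcases hbin i hi ω with h | h <;> rw [h]
      · simp
      · rw [mul_one, mul_one, hlam, Real.exp_log hr0]; ring
    have hprod_exp : ∀ ω, ∏ i ∈ Finset.Icc 1 n, (1 + (r - 1) * I i ω)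
        = Real.exp (lam * ∑ i ∈ Finset.Icc 1 n, I i ω) := by
      intro ω
      rw [Finset.mul_sum, Real.exp_sum]
      exact Finset.prod_congr rfl fun i hi => hfactor i hi ω
    have hsubset : {ω | (τ : ℝ) ≤ ∑ i ∈ Finset.Icc 1 n, I i ω}
        ⊆ {ω | Real.exp (lam * τ) ≤ ∏ i ∈ Finset.Icc 1 n, (1 + (r - 1) * I i ω)} := by
      intro ω hω
      simp only [Set.mem_setOf_eq] at hω ⊢
      rw [hprod_exp ω]
      exact Real.exp_le_exp.mpr (mul_le_mul_of_nonneg_left hω hlam0)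
    have hmarkov := mul_meas_ge_le_integral_of_nonneg
      (f := fun ω => ∏ i ∈ Finset.Icc 1 n, (1 + (r - 1) * I i ω))
      (ae_of_all _ fun ω => by
        show (0:ℝ) ≤ ∏ i ∈ Finset.Icc 1 n, (1 + (r - 1) * I i ω)
        rw [hprod_exp ω]; exact (Real.exp_pos _).le)
      hint (Real.exp (lam * τ))
    have hε : (0 : ℝ) < Real.exp (lam * τ) := Real.exp_pos _
    have htoReal : (μ {ω | Real.exp (lam * τ)
        ≤ ∏ i ∈ Finset.Icc 1 n, (1 + (r - 1) * I i ω)}).toReal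
        ≤ Real.exp (-(lam * τ)) * ((1 + r) / 2) ^ n := by
      have h2 : Real.exp (lam * τ) * (μ {ω | Real.exp (lam * τ)
          ≤ ∏ i ∈ Finset.Icc 1 n, (1 + (r - 1) * I i ω)}).toReal ≤ ((1 + r) / 2) ^ n :=
        le_trans hmarkov hbound
      rw [Real.exp_neg]
      calc (μ {ω | Real.exp (lam * τ)
            ≤ ∏ i ∈ Finset.Icc 1 n, (1 + (r - 1) * I i ω)}).toReal
          = (Real.exp (lam * τ))⁻¹ * (Real.exp (lam * τ) * (μ {ω | Real.exp (lam * τ)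
            ≤ ∏ i ∈ Finset.Icc 1 n, (1 + (r - 1) * I i ω)}).toReal) := by
            field_simp
        _ ≤ (Real.exp (lam * τ))⁻¹ * ((1 + r) / 2) ^ n :=
            mul_le_mul_of_nonneg_left h2 (by positivity)
    -- the algebraic identity
    have halg : Real.exp (-(lam * τ)) * ((1 + r) / 2) ^ n
        = Real.exp (-(n : ℝ) * klBin u (1/2)) := by
      have hcpos : (0 : ℝ) < (1 + r) / 2 := by linarith
      have hcval : (1 + r) / 2 = 1 / (2 * (1 - u)) := by
        rw [hr]; field_simp; ring
      have hpow : ((1 + r) / 2) ^ n = Real.exp ((n : ℝ) * Real.log ((1 + r) / 2)) := by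
        rw [Real.exp_nat_mul, Real.exp_log hcpos]
      rw [hpow, ← Real.exp_add]
      congr 1
      have hlogc : Real.log ((1 + r) / 2) = -(Real.log 2 + Real.log (1 - u)) := by
        rw [hcval, Real.log_div one_ne_zero (by positivity), Real.log_one,
          Real.log_mul (by norm_num) (ne_of_gt h1u)]
        ring
      have hlamval : lam = Real.log u - Real.log (1 - u) := by
        rw [hlam, hr, Real.log_div (ne_of_gt hu0) (ne_of_gt h1u)]
      have hτval : (τ : ℝ) = (n : ℝ) * u := by
        rw [hu]; field_simp
      have hklval : klBin u (1/2)
          = u * (Real.log 2 + Real.log u) + (1 - u) * (Real.log 2 + Real.log (1 - u)) := by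
        unfold klBin
        rw [show u / (1/2 : ℝ) = 2 * u by ring, show (1 - u) / (1 - 1/2 : ℝ) = 2 * (1 - u) by ring,
          Real.log_mul (by norm_num) (ne_of_gt hu0),
          Real.log_mul (by norm_num) (ne_of_gt h1u)]
      rw [hlogc, hlamval, hτval, hklval]
      ring
    calc μ {ω | (τ : ℝ) ≤ ∑ i ∈ Finset.Icc 1 n, I i ω}
        ≤ μ {ω | Real.exp (lam * τ)
            ≤ ∏ i ∈ Finset.Icc 1 n, (1 + (r - 1) * I i ω)} := measure_mono hsubset
      _ = ENNReal.ofReal ((μ {ω | Real.exp (lam * τ)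
            ≤ ∏ i ∈ Finset.Icc 1 n, (1 + (r - 1) * I i ω)}).toReal) :=
          (ENNReal.ofReal_toReal (measure_ne_top _ _)).symm
      _ ≤ ENNReal.ofReal (Real.exp (-(n : ℝ) * klBin ((τ : ℝ) / n) (1/2))) := by
          rw [← hu, ← halg]
          exact ENNReal.ofReal_le_ofReal htoReal
end
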